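/- Let Λ be a numerical semigroup and x ∈ Λ such that x has three representations x = a_i + a_j = a_k + a_l = a_m + a_n as sums of two distinct minimal generators (with {a_i,a_j}, {a_k,a_l}, {a_m,a_n} pairwise disjoint) and no representation as a multiple of a single generator or with three or more generators. Then B(x) \ {0} = {a_i, a_j, a_k, a_l, a_m, a_n, x} has exactly 7 elements. -/

import Mathlib

/-- A numerical semigroup: a cofinite additive submonoid of ℕ. -/
def IsNumericalSemigroup (Λ : Set ℕ) : Prop :=
  0 ∈ Λ ∧ (∀ a ∈ Λ, ∀ b ∈ Λ, a + b ∈ Λ) ∧ (Λᶜ).Finite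

/-- An ideal of a numerical semigroup: a nonempty subset `I ⊆ Λ` with `I + Λ ⊆ I`. -/
def IsIdeal (Λ I : Set ℕ) : Prop :=
  I.Nonempty ∧ I ⊆ Λ ∧ ∀ i ∈ I, ∀ s ∈ Λ, i + s ∈ I

/-- An irreducible ideal: one that is not the intersection of two proper ideals
each properly containing it. -/
def IsIrreducibleIdeal (Λ I : Set ℕ) : Prop :=
  IsIdeal Λ I ∧
    ¬ ∃ J K : Set ℕ, IsIdeal Λ J ∧ IsIdeal Λ K ∧ J ≠ Λ ∧ K ≠ Λ ∧
      I ⊂ J ∧ I ⊂ K ∧ I = J ∩ K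

/-- The graph `G_I(Λ)`: vertices are the nonzero elements of `Λ \ I`,
and `x ~ y` iff `x + y ∈ I`. -/
def semigroupGraph (Λ I : Set ℕ) : SimpleGraph ↥((Λ \ I) \ {0}) where
  Adj x y := (x : ℕ) ≠ (y : ℕ) ∧ (x : ℕ) + (y : ℕ) ∈ I
  symm := by
    constructor
    intro x y h
    exact ⟨fun e => h.1 e.symm, by rw [add_comm]; exact h.2⟩
  loopless := by constructor; intro x h; exact h.1 rfl

/-- `B(x) = {y ∈ Λ : x - y ∈ Λ}` (i.e. `y + z = x` for some `z ∈ Λ`). -/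
def Bset (Λ : Set ℕ) (x : ℕ) : Set ℕ :=
  {y ∈ Λ | ∃ z ∈ Λ, y + z = x}

/-- The minimal generating set of a numerical semigroup: the nonzero elements
that are not sums of two nonzero elements. -/
def MinimalGenerators (Λ : Set ℕ) : Set ℕ :=
  {a ∈ Λ | a ≠ 0 ∧ ¬ ∃ b ∈ Λ, ∃ c ∈ Λ, b ≠ 0 ∧ c ≠ 0 ∧ a = b + c}

/-- `L_x^{(p)}`: representations of `x` as a positive-integer combination of
exactly `p` distinct minimal generators of `Λ`, encoded as finitely supported
functions from generators to positive coefficients. -/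
def Lrep (Λ : Set ℕ) (x : ℕ) (p : ℕ) : Set (ℕ →₀ ℕ) :=
  {u | (↑u.support : Set ℕ) ⊆ MinimalGenerators Λ ∧ u.support.card = p ∧
    u.sum (fun a c => c * a) = x}

/-- `G` contains a subdivision of `H`: branch vertices joined by internally
disjoint paths. -/
def SimpleGraph.ContainsSubdivision {V W : Type*} (G : SimpleGraph V)
    (H : SimpleGraph W) : Prop :=
  ∃ b : W ↪ V, ∃ P : ∀ i j : W, H.Adj i j → G.Walk (b i) (b j),
    (∀ i j (h : H.Adj i j), (P i j h).IsPath) ∧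
    (∀ i j (h : H.Adj i j) (k : W), b k ∈ (P i j h).support → k = i ∨ k = j) ∧
    (∀ i j (h : H.Adj i j) (i' j' : W) (h' : H.Adj i' j'),
      ({i, j} : Set W) ≠ {i', j'} →
      ∀ v, v ∈ (P i j h).support → v ∈ (P i' j' h').support →
        v = b i ∨ v = b j)

/-- Planarity via Kuratowski's criterion: no subgraph homeomorphic to
`K₅` or `K₃,₃`. -/
def SimpleGraph.Planar {V : Type*} (G : SimpleGraph V) : Prop :=
  ¬ G.ContainsSubdivision (⊤ : SimpleGraph (Fin 5)) ∧
  ¬ G.ContainsSubdivision (completeBipartiteGraph (Fin 3) (Fin 3))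


lemma pair_sum' (a b : ℕ) :
    (Finsupp.single a 1 + Finsupp.single b 1).sum (fun a c => c * a) = a + b := by
  rw [Finsupp.sum_add_index' (fun a => zero_mul a) (fun a b₁ b₂ => add_mul b₁ b₂ a),
    Finsupp.sum_single_index (zero_mul a), Finsupp.sum_single_index (zero_mul b),
    one_mul, one_mul]

lemma pair_support' (a b : ℕ) (hab : a ≠ b) :
    (Finsupp.single a 1 + Finsupp.single b 1).support = {a, b} := by
  rw [Finsupp.support_add_eq, Finsupp.support_single_ne_zero a one_ne_zero,
    Finsupp.support_single_ne_zero b one_ne_zero]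
  · rfl
  · simp [Finsupp.support_single_ne_zero _ one_ne_zero]; exact hab

lemma pair_split' (a b : ℕ) (hab : a ≠ b) (uy uz : ℕ →₀ ℕ) (hy : uy ≠ 0) (hz : uz ≠ 0)
    (h : uy + uz = Finsupp.single a 1 + Finsupp.single b 1) :
    uy = Finsupp.single a 1 ∨ uy = Finsupp.single b 1 := by
  have happ : ∀ c, uy c + uz c = (if a = c then 1 else 0) + (if b = c then 1 else 0) := by
    intro c
    have := DFunLike.congr_fun h c
    simpa [Finsupp.single_apply] using this
  have ha := happ a
  have hb := happ b
  simp [hab, Ne.symm hab] at ha hb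
  have hzero : ∀ c, c ≠ a → c ≠ b → uy c = 0 ∧ uz c = 0 := by
    intro c hca hcb
    have := happ c
    simp [Ne.symm hca, Ne.symm hcb] at this
    omega
  rcases (by omega : uy a = 0 ∧ uy b = 0 ∨ uy a = 1 ∧ uy b = 1 ∨
      uy a = 1 ∧ uy b = 0 ∨ uy a = 0 ∧ uy b = 1) with ⟨h1, h2⟩ | ⟨h1, h2⟩ | ⟨h1, h2⟩ | ⟨h1, h2⟩
  · exact absurd (Finsupp.ext fun c => by
      rcases eq_or_ne c a with rfl | hca
      · simpa using h1
      rcases eq_or_ne c b with rfl | hcb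
      · simpa using h2
      · simpa using (hzero c hca hcb).1) hy
  · exact absurd (Finsupp.ext fun c => by
      rcases eq_or_ne c a with rfl | hca
      · simp; omega
      rcases eq_or_ne c b with rfl | hcb
      · simp; omega
      · simpa using (hzero c hca hcb).2) hz
  · left
    exact Finsupp.ext fun c => by
      rcases eq_or_ne c a with rfl | hca
      · simpa [Finsupp.single_apply] using h1
      rcases eq_or_ne c b with rfl | hcb
      · simpa [Finsupp.single_apply, hab] using h2
      · simpa [Finsupp.single_apply, Ne.symm hca] using (hzero c hca hcb).1
  · right
    exact Finsupp.ext fun c => by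
      rcases eq_or_ne c a with rfl | hca
      · simpa [Finsupp.single_apply, Ne.symm hab] using h1
      rcases eq_or_ne c b with rfl | hcb
      · simpa [Finsupp.single_apply] using h2
      · simpa [Finsupp.single_apply, Ne.symm hcb] using (hzero c hca hcb).1

lemma exists_rep' (Λ : Set ℕ) :
    ∀ y, y ∈ Λ → y ≠ 0 → ∃ u : ℕ →₀ ℕ, (↑u.support : Set ℕ) ⊆ MinimalGenerators Λ ∧
      u ≠ 0 ∧ u.sum (fun a c => c * a) = y := by
  intro y
  induction y using Nat.strong_induction_on with
  | _ y ih =>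
  intro hy hy0
  by_cases hgen : ∃ b ∈ Λ, ∃ c ∈ Λ, b ≠ 0 ∧ c ≠ 0 ∧ y = b + c
  · obtain ⟨b, hb, c, hc, hb0, hc0, rfl⟩ := hgen
    obtain ⟨ub, hubs, hub0, hubsum⟩ := ih b (by omega) hb hb0
    obtain ⟨uc, hucs, huc0, hucsum⟩ := ih c (by omega) hc hc0
    refine ⟨ub + uc, ?_, ?_, ?_⟩
    · intro a ha
      rw [Finset.mem_coe] at ha
      rcases Finset.mem_union.mp (Finsupp.support_add ha) with h | h
      · exact hubs h
      · exact hucs h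
    · intro h
      apply hub0
      ext a
      have := DFunLike.congr_fun h a
      simp at this ⊢
      omega
    · rw [Finsupp.sum_add_index' (fun a => zero_mul a) (fun a b₁ b₂ => add_mul b₁ b₂ a),
        hubsum, hucsum]
  · refine ⟨Finsupp.single y 1, ?_, by simp [Finsupp.single_eq_zero], ?_⟩
    · intro a ha
      rw [Finset.mem_coe, Finsupp.support_single_ne_zero _ one_ne_zero,
        Finset.mem_singleton] at ha
      subst ha
      exact ⟨hy, hy0, hgen⟩
    · rw [Finsupp.sum_single_index (zero_mul y), one_mul]

/-- If `x = aᵢ+aⱼ = a_k+a_l = a_m+a_n` are three representations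
of `x` as sums of two distinct minimal generators, with the pairs pairwise
disjoint, and `x` has no representation as a multiple of a single generator
nor with three or more generators, then
`B(x) \ {0} = {aᵢ, aⱼ, a_k, a_l, a_m, a_n, x}` has exactly 7 elements. -/
theorem Bset_of_three_pair_representations (Λ : Set ℕ)
    (hΛ : IsNumericalSemigroup Λ) (x ai aj ak al am an : ℕ)
    (hai : ai ∈ MinimalGenerators Λ) (haj : aj ∈ MinimalGenerators Λ)
    (hak : ak ∈ MinimalGenerators Λ) (hal : al ∈ MinimalGenerators Λ)
    (ham : am ∈ MinimalGenerators Λ) (han : an ∈ MinimalGenerators Λ)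
    (hdist : Function.Injective ![ai, aj, ak, al, am, an])
    (hx1 : x = ai + aj) (hx2 : x = ak + al) (hx3 : x = am + an)
    (hL1 : Lrep Λ x 1 = ∅) (hL2 : (Lrep Λ x 2).ncard = 3)
    (hLp : ∀ p, 3 ≤ p → Lrep Λ x p = ∅) :
    Bset Λ x \ {0} = {ai, aj, ak, al, am, an, x} ∧
    (Bset Λ x \ {0}).ncard = 7 := by
  obtain ⟨hΛ0, hΛadd, -⟩ := hΛ
  obtain ⟨haiL, hai0, hai3⟩ := hai
  obtain ⟨hajL, haj0, haj3⟩ := haj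
  obtain ⟨hakL, hak0, hak3⟩ := hak
  obtain ⟨halL, hal0, hal3⟩ := hal
  obtain ⟨hamL, ham0, ham3⟩ := ham
  obtain ⟨hanL, han0, han3⟩ := han
  have hne : ∀ (i j : Fin 6), i ≠ j → ![ai,aj,ak,al,am,an] i ≠ ![ai,aj,ak,al,am,an] j :=
    fun i j h hc => h (hdist hc)
  have h01 : ai ≠ aj := hne 0 1 (by decide)
  have h02 : ai ≠ ak := hne 0 2 (by decide)
  have h03 : ai ≠ al := hne 0 3 (by decide)
  have h04 : ai ≠ am := hne 0 4 (by decide)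
  have h05 : ai ≠ an := hne 0 5 (by decide)
  have h12 : aj ≠ ak := hne 1 2 (by decide)
  have h13 : aj ≠ al := hne 1 3 (by decide)
  have h14 : aj ≠ am := hne 1 4 (by decide)
  have h15 : aj ≠ an := hne 1 5 (by decide)
  have h23 : ak ≠ al := hne 2 3 (by decide)
  have h24 : ak ≠ am := hne 2 4 (by decide)
  have h25 : ak ≠ an := hne 2 5 (by decide)
  have h34 : al ≠ am := hne 3 4 (by decide)
  have h35 : al ≠ an := hne 3 5 (by decide)
  have h45 : am ≠ an := hne 4 5 (by decide)
  have hx0 : x ≠ 0 := by omega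
  have hxi : x ≠ ai := by omega
  have hxj : x ≠ aj := by omega
  have hxk : x ≠ ak := fun h => hak3 ⟨ai, haiL, aj, hajL, hai0, haj0, by omega⟩
  have hxl : x ≠ al := fun h => hal3 ⟨ai, haiL, aj, hajL, hai0, haj0, by omega⟩
  have hxm : x ≠ am := fun h => ham3 ⟨ai, haiL, aj, hajL, hai0, haj0, by omega⟩
  have hxn : x ≠ an := fun h => han3 ⟨ai, haiL, aj, hajL, hai0, haj0, by omega⟩
  have hxL : x ∈ Λ := hx1 ▸ hΛadd ai haiL aj hajL
  -- the three canonical representations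
  set f1 := Finsupp.single ai 1 + Finsupp.single aj 1 with hf1def
  set f2 := Finsupp.single ak 1 + Finsupp.single al 1 with hf2def
  set f3 := Finsupp.single am 1 + Finsupp.single an 1 with hf3def
  have hmemL : ∀ a b : ℕ, a ≠ b → a ∈ MinimalGenerators Λ → b ∈ MinimalGenerators Λ →
      x = a + b → (Finsupp.single a 1 + Finsupp.single b 1) ∈ Lrep Λ x 2 := by
    intro a b hab hma hmb hxab
    refine ⟨?_, ?_, by rw [pair_sum']; omega⟩
    · rw [pair_support' a b hab]
      intro c hc
      rw [Finset.coe_insert, Finset.coe_singleton] at hc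
      rcases hc with rfl | rfl
      · exact hma
      · exact hmb
    · rw [pair_support' a b hab, Finset.card_insert_of_notMem (by simpa using hab),
        Finset.card_singleton]
  have hf1mem : f1 ∈ Lrep Λ x 2 := hmemL ai aj h01 ⟨haiL, hai0, hai3⟩ ⟨hajL, haj0, haj3⟩ hx1
  have hf2mem : f2 ∈ Lrep Λ x 2 := hmemL ak al h23 ⟨hakL, hak0, hak3⟩ ⟨halL, hal0, hal3⟩ hx2
  have hf3mem : f3 ∈ Lrep Λ x 2 := hmemL am an h45 ⟨hamL, ham0, ham3⟩ ⟨hanL, han0, han3⟩ hx3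
  have happly : ∀ a b c : ℕ, ((Finsupp.single a 1 + Finsupp.single b 1 : ℕ →₀ ℕ)) c =
      (if a = c then 1 else 0) + (if b = c then 1 else 0) := by
    intro a b c; simp [Finsupp.single_apply]
  have hf12 : f1 ≠ f2 := by
    intro h
    have := DFunLike.congr_fun h ai
    rw [hf1def, hf2def, happly, happly] at this
    simp [Ne.symm h02, Ne.symm h03] at this
  have hf13 : f1 ≠ f3 := by
    intro h
    have := DFunLike.congr_fun h ai
    rw [hf1def, hf3def, happly, happly] at this
    simp [Ne.symm h04, Ne.symm h05] at this
  have hf23 : f2 ≠ f3 := by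
    intro h
    have := DFunLike.congr_fun h ak
    rw [hf2def, hf3def, happly, happly] at this
    simp [Ne.symm h24, Ne.symm h25] at this
  have hfin : (Lrep Λ x 2).Finite := by
    by_contra h
    have := Set.Infinite.ncard h
    omega
  have hsub : ({f1, f2, f3} : Set (ℕ →₀ ℕ)) ⊆ Lrep Λ x 2 := by
    intro u hu
    rcases hu with rfl | rfl | rfl
    · exact hf1mem
    · exact hf2mem
    · exact hf3mem
  have hcard3 : ({f1, f2, f3} : Set (ℕ →₀ ℕ)).ncard = 3 :=
    Set.ncard_eq_three.mpr ⟨f1, f2, f3, hf12, hf13, hf23, rfl⟩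
  have hLeq : Lrep Λ x 2 = {f1, f2, f3} :=
    (Set.eq_of_subset_of_ncard_le hsub (by rw [hL2, hcard3]) hfin).symm
  have hset : Bset Λ x \ {0} = {ai, aj, ak, al, am, an, x} := by
    ext y
    constructor
    · rintro ⟨⟨hyL, z, hzL, hyz⟩, hy0⟩
      rw [Set.mem_singleton_iff] at hy0
      by_cases hz0 : z = 0
      · subst hz0
        simp only [add_zero] at hyz
        subst hyz
        simp
      · obtain ⟨uy, huys, huy0, huysum⟩ := exists_rep' Λ y hyL hy0
        obtain ⟨uz, huzs, huz0, huzsum⟩ := exists_rep' Λ z hzL hz0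
        have humem : uy + uz ∈ Lrep Λ x ((uy + uz).support.card) := by
          refine ⟨?_, rfl, ?_⟩
          · intro a ha
            rw [Finset.mem_coe] at ha
            rcases Finset.mem_union.mp (Finsupp.support_add ha) with h | h
            · exact huys h
            · exact huzs h
          · rw [Finsupp.sum_add_index' (fun a => zero_mul a) (fun a b₁ b₂ => add_mul b₁ b₂ a),
              huysum, huzsum, hyz]
        have hp0 : (uy + uz).support.card ≠ 0 := by
          intro h
          rw [Finset.card_eq_zero, Finsupp.support_eq_empty] at h
          apply huy0
          ext a
          have := DFunLike.congr_fun h a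
          simp at this ⊢
          omega
        have hp1 : (uy + uz).support.card ≠ 1 := by
          intro h
          rw [h] at humem
          rw [hL1] at humem
          exact humem
        have hp3 : (uy + uz).support.card < 3 := by
          by_contra h
          rw [hLp _ (by omega)] at humem
          exact humem
        have hp2 : (uy + uz).support.card = 2 := by omega
        rw [hp2, hLeq] at humem
        have hy_eq : ∀ a b : ℕ, a ≠ b → uy + uz = Finsupp.single a 1 + Finsupp.single b 1 →
            y = a ∨ y = b := by
          intro a b hab h
          rcases pair_split' a b hab uy uz huy0 huz0 h with rfl | rfl
          · left; rw [← huysum, Finsupp.sum_single_index (zero_mul a), one_mul]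
          · right; rw [← huysum, Finsupp.sum_single_index (zero_mul b), one_mul]
        rcases humem with h | h | h
        · rcases hy_eq ai aj h01 h with rfl | rfl <;> simp
        · rcases hy_eq ak al h23 h with rfl | rfl <;> simp
        · rcases hy_eq am an h45 h with rfl | rfl <;> simp
    · intro hy
      simp only [Set.mem_insert_iff, Set.mem_singleton_iff] at hy
      rcases hy with rfl | rfl | rfl | rfl | rfl | rfl | rfl
      · exact ⟨⟨haiL, aj, hajL, hx1.symm⟩, hai0⟩
      · exact ⟨⟨hajL, ai, haiL, by omega⟩, haj0⟩
      · exact ⟨⟨hakL, al, halL, hx2.symm⟩, hak0⟩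
      · exact ⟨⟨halL, ak, hakL, by omega⟩, hal0⟩
      · exact ⟨⟨hamL, an, hanL, hx3.symm⟩, ham0⟩
      · exact ⟨⟨hanL, am, hamL, by omega⟩, han0⟩
      · exact ⟨⟨hxL, 0, hΛ0, by omega⟩, hx0⟩
  refine ⟨hset, ?_⟩
  rw [hset]
  rw [Set.ncard_insert_of_notMem (by
        simp only [Set.mem_insert_iff, Set.mem_singleton_iff]; push_neg
        exact ⟨h01, h02, h03, h04, h05, Ne.symm hxi⟩),
    Set.ncard_insert_of_notMem (by
        simp only [Set.mem_insert_iff, Set.mem_singleton_iff]; push_neg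
        exact ⟨h12, h13, h14, h15, Ne.symm hxj⟩),
    Set.ncard_insert_of_notMem (by
        simp only [Set.mem_insert_iff, Set.mem_singleton_iff]; push_neg
        exact ⟨h23, h24, h25, Ne.symm hxk⟩),
    Set.ncard_insert_of_notMem (by
        simp only [Set.mem_insert_iff, Set.mem_singleton_iff]; push_neg
        exact ⟨h34, h35, Ne.symm hxl⟩),
    Set.ncard_insert_of_notMem (by
        simp only [Set.mem_insert_iff, Set.mem_singleton_iff]; push_neg
        exact ⟨h45, Ne.symm hxm⟩),
    Set.ncard_insert_of_notMem (by simpa using Ne.symm hxn),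
    Set.ncard_singleton]
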